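/- Let R be a principal ideal domain and let C : Matrix (Fin z) (Fin n) R and D : Matrix (Fin z) (Fin m) R be matrices (viewed as arrows n → z and m → z of Mat(R)). Then there exist a natural number r with r ≤ n + m and matrices A : Matrix (Fin n) (Fin r) R, B : Matrix (Fin m) (Fin r) R such that C·A = D·B and the square is a pullback in Mat(R): for every q ∈ ℕ and all matrices P : Matrix (Fin n) (Fin q) R, Q : Matrix (Fin m) (Fin q) R with C·P = D·Q there exists a unique H : Matrix (Fin r) (Fin q) R with A·H = P and B·H = Q. In other words, Mat(R) has pullbacks for any principal ideal domain R. -/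

import Mathlib

/-- The category of matrices over a principal ideal domain has pullbacks; moreover the
pullback object (a free module) has rank at most `n + m`. -/
theorem matrix_pid_has_pullbacks
    {R : Type*} [CommRing R] [IsDomain R] [IsPrincipalIdealRing R]
    {n m z : ℕ} (C : Matrix (Fin z) (Fin n) R) (D : Matrix (Fin z) (Fin m) R) :
    ∃ (r : ℕ), r ≤ n + m ∧
      ∃ (A : Matrix (Fin n) (Fin r) R) (B : Matrix (Fin m) (Fin r) R),
        C * A = D * B ∧
        ∀ (q : ℕ) (P : Matrix (Fin n) (Fin q) R) (Q : Matrix (Fin m) (Fin q) R),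
          C * P = D * Q → ∃! H : Matrix (Fin r) (Fin q) R, A * H = P ∧ B * H = Q := by
  classical
  set E : Matrix (Fin z) (Fin n ⊕ Fin m) R :=
    Matrix.of fun k => Sum.elim (C k) (fun j => -(D k j)) with hE
  set K := LinearMap.ker E.mulVecLin with hK
  obtain ⟨r, b⟩ := Submodule.basisOfPid (Pi.basisFun R (Fin n ⊕ Fin m)) K
  have hr : r ≤ n + m := by
    have h1 : Module.finrank R K = r := by
      rw [Module.finrank_eq_card_basis b, Fintype.card_fin]
    have h2 := Submodule.finrank_le K
    rw [h1, Module.finrank_pi] at h2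
    simpa using h2
  have memK : ∀ x : (Fin n ⊕ Fin m) → R, x ∈ K ↔
      ∀ k, ∑ i, C k i * x (Sum.inl i) = ∑ j, D k j * x (Sum.inr j) := by
    intro x
    rw [hK, LinearMap.mem_ker, funext_iff]
    refine forall_congr' fun k => ?_
    rw [Matrix.mulVecLin_apply, Pi.zero_apply, Matrix.mulVec, dotProduct,
      Fintype.sum_sum_type]
    simp only [hE, Matrix.of_apply, Sum.elim_inl, Sum.elim_inr, neg_mul]
    rw [Finset.sum_neg_distrib, add_neg_eq_zero]
  -- evaluation of sums of basis vectors
  have eval_sum : ∀ (c : Fin r → R) (x : Fin n ⊕ Fin m),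
      ((↑(∑ t, c t • b t) : (Fin n ⊕ Fin m) → R)) x = ∑ t, c t * ((b t : (Fin n ⊕ Fin m) → R) x) := by
    intro c x
    rw [AddSubmonoidClass.coe_finset_sum, Finset.sum_apply]
    simp [smul_eq_mul]
  refine ⟨r, hr, Matrix.of (fun i t => (b t : (Fin n ⊕ Fin m) → R) (Sum.inl i)),
    Matrix.of (fun j t => (b t : (Fin n ⊕ Fin m) → R) (Sum.inr j)), ?_, ?_⟩
  · ext k t
    simp only [Matrix.mul_apply, Matrix.of_apply]
    exact (memK _).1 (b t).2 k
  · intro q P Q hPQ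
    have hv : ∀ l : Fin q, (Sum.elim (fun i => P i l) (fun j => Q j l)) ∈ K := by
      intro l
      rw [memK]
      intro k
      have := congrFun (congrFun hPQ k) l
      simpa [Matrix.mul_apply] using this
    set v : Fin q → K := fun l => ⟨_, hv l⟩ with hvdef
    refine ⟨Matrix.of (fun t l => b.repr (v l) t), ⟨?_, ?_⟩, ?_⟩
    · ext i l
      have h := congrArg (fun y : K => (y : (Fin n ⊕ Fin m) → R) (Sum.inl i)) (b.sum_repr (v l))
      rw [eval_sum] at h
      change _ = P i l at h
      simp only [Matrix.mul_apply, Matrix.of_apply]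
      rw [← h]
      exact Finset.sum_congr rfl fun s _ => mul_comm _ _
    · ext j l
      have h := congrArg (fun y : K => (y : (Fin n ⊕ Fin m) → R) (Sum.inr j)) (b.sum_repr (v l))
      rw [eval_sum] at h
      change _ = Q j l at h
      simp only [Matrix.mul_apply, Matrix.of_apply]
      rw [← h]
      exact Finset.sum_congr rfl fun s _ => mul_comm _ _
    · rintro H' ⟨hA, hB⟩
      ext t l
      have hsum : ∑ s, H' s l • b s = v l := by
        apply Subtype.ext
        funext x
        rw [eval_sum]
        cases x with
        | inl i =>
          have := congrFun (congrFun hA i) l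
          simp only [Matrix.mul_apply, Matrix.of_apply] at this
          simpa [hvdef, mul_comm] using this
        | inr j =>
          have := congrFun (congrFun hB j) l
          simp only [Matrix.mul_apply, Matrix.of_apply] at this
          simpa [hvdef, mul_comm] using this
      have := congrFun (b.repr_sum_self (fun s => H' s l)) t
      rw [hsum] at this
      simp only [Matrix.of_apply]
      rw [← this]
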